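/- Let I1 and I2 be two MM instances with the same students, schools, preference lists and priority orders, whose capacity functions q1 and q2 satisfy q1(w) ≤ q2(w) for every school w. Let μ1 and μ2 be the student-optimal stable matchings of I1 and I2, respectively. Then every student weakly prefers μ2 to μ1: for each student u, either μ2(u) = μ1(u), or u is matched under μ2 and (u is unmatched under μ1 or u prefers μ2(u) to μ1(u)). -/

import Mathlib

/-!
Basic framework for many-to-one matching (MM) instances with two-sided
preferences, following the paper "Optimal Capacity Modification for
Many-to-One Matching Problems".

Preference/priority orders are encoded by rank functions (`rkS`, `rkW`):
a smaller rank means more preferred; ranks are required to be injective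
on the respective sets of acceptable partners.
-/

structure MM (U W : Type*) [Fintype U] [Fintype W] [DecidableEq U] [DecidableEq W] where
  /-- acceptable schools of a student -/
  accS : U → Finset W
  /-- students on a school's priority list -/
  accW : W → Finset U
  /-- every student has a nonempty preference list -/
  acc_ne : ∀ u, (accS u).Nonempty
  /-- mutual acceptability -/
  acc_iff : ∀ u w, u ∈ accW w ↔ w ∈ accS u
  /-- rank of a school in a student's list (smaller = better) -/
  rkS : U → W → ℕ
  /-- rank of a student in a school's priority list (smaller = better) -/
  rkW : W → U → ℕ
  rkS_inj : ∀ u, ∀ w1 ∈ accS u, ∀ w2 ∈ accS u, rkS u w1 = rkS u w2 → w1 = w2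
  rkW_inj : ∀ w, ∀ u1 ∈ accW w, ∀ u2 ∈ accW w, rkW w u1 = rkW w u2 → u1 = u2
  /-- capacities -/
  q : W → ℕ
  q_pos : ∀ w, 1 ≤ q w

namespace MM

variable {U W : Type*} [Fintype U] [Fintype W] [DecidableEq U] [DecidableEq W]

/-- `μ` is a (partial) matching: it assigns only acceptable schools. -/
def IsMatching (I : MM U W) (μ : U → Option W) : Prop :=
  ∀ u w, μ u = some w → w ∈ I.accS u

/-- the set of students assigned to school `w` -/
def assignedTo (μ : U → Option W) (w : W) : Set U := {u | μ u = some w}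

/-- the number of students assigned to school `w` -/
noncomputable def load (μ : U → Option W) (w : W) : ℕ := (assignedTo μ w).ncard

/-- `μ` is feasible: it is a matching respecting all capacities. -/
def Feasible (I : MM U W) (μ : U → Option W) : Prop :=
  I.IsMatching μ ∧ ∀ w, load μ w ≤ I.q w

/-- `μ` is perfect: every student is matched. -/
def Perfect (μ : U → Option W) : Prop := ∀ u, μ u ≠ none

/-- student `u` strictly prefers school `w` to the outcome `o`
(where `o = none` means being unmatched) -/
def PrefOut (I : MM U W) (u : U) (w : W) (o : Option W) : Prop :=
  o = none ∨ ∃ w', o = some w' ∧ I.rkS u w < I.rkS u w'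

/-- `(u,w)` is a blocking pair of `μ` -/
def Blocks (I : MM U W) (μ : U → Option W) (u : U) (w : W) : Prop :=
  u ∈ I.accW w ∧ I.PrefOut u w (μ u) ∧
    (load μ w < I.q w ∨ ∃ u' ∈ assignedTo μ w, I.rkW w u < I.rkW w u')

/-- `μ` is stable: feasible and with no blocking pair -/
def Stable (I : MM U W) (μ : U → Option W) : Prop :=
  I.Feasible μ ∧ ∀ u w, ¬ I.Blocks μ u w

/-- student `u` is strictly better off under `μ` than under `σ` -/
def Better (I : MM U W) (u : U) (μ σ : U → Option W) : Prop :=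
  ∃ w, μ u = some w ∧ I.PrefOut u w (σ u)

/-- student `u` weakly prefers `μ` to `σ` -/
def WeakPref (I : MM U W) (u : U) (μ σ : U → Option W) : Prop :=
  μ u = σ u ∨ I.Better u μ σ

/-- `μ` dominates `σ` -/
def Dominates (I : MM U W) (μ σ : U → Option W) : Prop :=
  (∀ u, I.WeakPref u μ σ) ∧ ∃ u, I.Better u μ σ

/-- `μ` is (Pareto-)efficient: feasible and dominated by no feasible matching -/
def Efficient (I : MM U W) (μ : U → Option W) : Prop :=
  I.Feasible μ ∧ ∀ σ, I.Feasible σ → ¬ I.Dominates σ μ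

/-- `μ` is a student-optimal stable matching -/
def StudentOptimal (I : MM U W) (μ : U → Option W) : Prop :=
  I.Stable μ ∧ ∀ σ, I.Stable σ → ∀ u, I.WeakPref u μ σ

/-- increase capacities by the vector `r` -/
def incCap (I : MM U W) (r : W → ℕ) : MM U W :=
  { I with
    q := fun w => I.q w + r w
    q_pos := fun w => le_trans (I.q_pos w) (Nat.le_add_right _ _) }

/-- replace the capacities by `q'` -/
def withCap (I : MM U W) (q' : W → ℕ) (hq' : ∀ w, 1 ≤ q' w) : MM U W :=
  { I with
    q := q'
    q_pos := hq' }

/-- student `x` justifiedly envies student `y` under `σ` -/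
def JEnvy (I : MM U W) (σ : U → Option W) (x y : U) : Prop :=
  ∃ w, σ y = some w ∧ x ∈ I.accW w ∧ I.rkW w x < I.rkW w y ∧ I.PrefOut x w (σ x)

/-- the set of students unmatched under `μ` -/
def unmatchedSet (μ : U → Option W) : Set U := {u | μ u = none}

/-- `v` is an assignment vector: it assigns to each student unmatched
under `μhat` an acceptable school -/
def IsAsgVec (I : MM U W) (μhat : U → Option W) (v : U → W) : Prop :=
  ∀ u, μhat u = none → v u ∈ I.accS u

/-- `μhat + v` : additionally match every unmatched student `u` to `v u` -/
def extend (μhat : U → Option W) (v : U → W) : U → Option W :=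
  fun u => some ((μhat u).getD (v u))

/-- JE(v): the assigned students who justifiedly envy some unassigned student
under `μhat + v` -/
def JEset (I : MM U W) (μhat : U → Option W) (v : U → W) : Set U :=
  {x | μhat x ≠ none ∧ ∃ y, μhat y = none ∧ I.JEnvy (extend μhat v) x y}

/-- `n_je(v)` -/
noncomputable def nje (I : MM U W) (μhat : U → Option W) (v : U → W) : ℕ :=
  (I.JEset μhat v).ncard

end MM

noncomputable section DAux
open MM
open scoped Classical

variable {U W : Type*} [Fintype U] [Fintype W] [DecidableEq U] [DecidableEq W]

/-- pick a minimum-rank school from `S` for student `u` -/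
def daPick (I : MM U W) (u : U) (S : Finset W) : Option W :=
  if h : S.Nonempty then some ((S.exists_min_image (I.rkS u) h).choose) else none

theorem daPick_spec {I : MM U W} {u : U} {S : Finset W} {w : W}
    (h : daPick I u S = some w) : w ∈ S ∧ ∀ w' ∈ S, I.rkS u w ≤ I.rkS u w' := by
  by_cases hne : S.Nonempty
  · rw [daPick, dif_pos hne, Option.some_inj] at h
    subst h
    exact (S.exists_min_image (I.rkS u) hne).choose_spec
  · rw [daPick, dif_neg hne] at h
    cases h

theorem daPick_some {I : MM U W} {u : U} {S : Finset W} (h : S.Nonempty) :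
    ∃ w, daPick I u S = some w := by
  unfold daPick
  rw [dif_pos h]
  exact ⟨_, rfl⟩

/-- current proposal of student `u`, given that the schools in `R u` have
rejected `u` already -/
def daProp (I : MM U W) (R : U → Finset W) (u : U) : Option W :=
  daPick I u (I.accS u \ R u)

theorem daProp_spec {I : MM U W} {R : U → Finset W} {u : U} {w : W}
    (h : daProp I R u = some w) :
    w ∈ I.accS u \ R u ∧ ∀ w' ∈ I.accS u \ R u, I.rkS u w ≤ I.rkS u w' :=
  daPick_spec h

/-- current proposers at school `w` -/
def daProps (I : MM U W) (R : U → Finset W) (w : W) : Finset U :=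
  Finset.univ.filter (fun u => daProp I R u = some w)

theorem mem_daProps {I : MM U W} {R : U → Finset W} {w : W} {u : U} :
    u ∈ daProps I R w ↔ daProp I R u = some w := by
  simp [daProps]

theorem daProps_subset_accW {I : MM U W} {R : U → Finset W} {w : W} {u : U}
    (hu : u ∈ daProps I R w) : u ∈ I.accW w :=
  (I.acc_iff u w).2 ((Finset.mem_sdiff.1 (daProp_spec (mem_daProps.1 hu)).1).1)

/-- proposers at `w` beating `u` -/
def daBeats (I : MM U W) (R : U → Finset W) (w : W) (u : U) : Finset U :=
  (daProps I R w).filter (fun u' => I.rkW w u' < I.rkW w u)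

/-- proposers rejected by `w` at the current round -/
def daRej (I : MM U W) (R : U → Finset W) (w : W) : Finset U :=
  (daProps I R w).filter (fun u => I.q w ≤ (daBeats I R w u).card)

/-- one round of deferred acceptance -/
def daStep (I : MM U W) (R : U → Finset W) : U → Finset W := fun u =>
  match daProp I R u with
  | none => R u
  | some w => if u ∈ daRej I R w then insert w (R u) else R u

theorem daStep_subset (I : MM U W) (R : U → Finset W) (u : U) : R u ⊆ daStep I R u := by
  unfold daStep
  cases daProp I R u with
  | none => exact Finset.Subset.refl _
  | some w =>
    dsimp only
    split_ifs
    · exact Finset.subset_insert _ _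
    · exact Finset.Subset.refl _

theorem daStep_cases {I : MM U W} {R : U → Finset W} {u : U} {w : W}
    (h : w ∈ daStep I R u) :
    w ∈ R u ∨ (daProp I R u = some w ∧ u ∈ daRej I R w) := by
  unfold daStep at h
  rcases hp : daProp I R u with _ | w0
  · rw [hp] at h
    exact Or.inl h
  · rw [hp] at h
    dsimp only at h
    split_ifs at h with hr
    · rcases Finset.mem_insert.1 h with rfl | h
      · exact Or.inr ⟨rfl, hr⟩
      · exact Or.inl h
    · exact Or.inl h

theorem daStep_eq_of_not_rej {I : MM U W} {R : U → Finset W} {k : U} {w : W}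
    (hk : daProp I R k = some w) (hr : k ∉ daRej I R w) : daStep I R k = R k := by
  unfold daStep
  rw [hk]
  exact if_neg hr

theorem daStep_eq_of_rej {I : MM U W} {R : U → Finset W} {k : U} {w : W}
    (hk : daProp I R k = some w) (hr : k ∈ daRej I R w) :
    daStep I R k = insert w (R k) := by
  unfold daStep
  rw [hk]
  exact if_pos hr

theorem daProp_step_of_not_rej {I : MM U W} {R : U → Finset W} {k : U} {w : W}
    (hk : daProp I R k = some w) (hr : k ∉ daRej I R w) :
    daProp I (daStep I R) k = some w := by
  unfold daProp
  rw [daStep_eq_of_not_rej hk hr]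
  exact hk

/-- if `u` is rejected by `w`, then at least `q w` proposers at `w` are kept
(not rejected) and beat `u` -/
theorem daRej_aux {I : MM U W} {R : U → Finset W} {w : W} {u : U}
    (hu : u ∈ daRej I R w) :
    I.q w ≤ ((daProps I R w).filter
      (fun k => k ∉ daRej I R w ∧ I.rkW w k < I.rkW w u)).card := by
  obtain ⟨r, hrmem, hrmin⟩ := (daRej I R w).exists_min_image (I.rkW w) ⟨u, hu⟩
  have hrq : I.q w ≤ (daBeats I R w r).card := (Finset.mem_filter.1 hrmem).2
  refine le_trans hrq (Finset.card_le_card ?_)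
  intro b hb
  obtain ⟨hbP, hbr⟩ := Finset.mem_filter.1 hb
  refine Finset.mem_filter.2 ⟨hbP, ?_, ?_⟩
  · intro hbrej
    exact absurd (hrmin b hbrej) (not_le.2 hbr)
  · exact lt_of_lt_of_le hbr (hrmin u hu)

/-- invariants maintained during deferred acceptance, relative to a matching
`μ1` that is stable for the smaller capacities -/
def DaInv (I : MM U W) (μ1 : U → Option W) (R : U → Finset W) : Prop :=
  (∀ u, R u ⊆ I.accS u) ∧
  (∀ u w, w ∈ R u → I.q w ≤ (daBeats I R w u).card) ∧
  (∀ u w, μ1 u = some w → w ∉ R u)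

/-- hypotheses on `μ1`: a matching, respecting capacities `q1 ≤ I.q`, with no
priority-based blocking pair -/
def DaHyp (I : MM U W) (q1 : W → ℕ) (μ1 : U → Option W) : Prop :=
  I.IsMatching μ1 ∧ (∀ w, load μ1 w ≤ q1 w) ∧ (∀ w, q1 w ≤ I.q w) ∧
  (∀ x w, x ∈ I.accW w → I.PrefOut x w (μ1 x) →
    ∀ u', μ1 u' = some w → ¬ I.rkW w x < I.rkW w u')

theorem daInv_step {I : MM U W} {q1 : W → ℕ} {μ1 : U → Option W} {R : U → Finset W}
    (hH : DaHyp I q1 μ1) (hInv : DaInv I μ1 R) : DaInv I μ1 (daStep I R) := by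
  obtain ⟨hgood, hinv1, hinv2⟩ := hInv
  obtain ⟨hm, hload, hqle, hnb⟩ := hH
  have persist : ∀ (u : U) (w : W),
      ∀ k ∈ (daProps I R w).filter (fun k => k ∉ daRej I R w ∧ I.rkW w k < I.rkW w u),
        k ∈ daBeats I (daStep I R) w u := by
    intro u w k hk
    obtain ⟨hkP, hknr, hklt⟩ := Finset.mem_filter.1 hk
    exact Finset.mem_filter.2
      ⟨mem_daProps.2 (daProp_step_of_not_rej (mem_daProps.1 hkP) hknr), hklt⟩
  refine ⟨?_, ?_, ?_⟩
  · -- good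
    intro u w hw
    rcases daStep_cases hw with hold | ⟨hp, _⟩
    · exact hgood u hold
    · exact (Finset.mem_sdiff.1 (daProp_spec hp).1).1
  · -- inv1
    intro u w hw
    rcases daStep_cases hw with hold | ⟨hp, hr⟩
    · by_cases hex : ∃ r ∈ daBeats I R w u, r ∈ daRej I R w
      · obtain ⟨r, hrb, hrrej⟩ := hex
        have hru : I.rkW w r < I.rkW w u := (Finset.mem_filter.1 hrb).2
        refine le_trans (daRej_aux hrrej) (Finset.card_le_card ?_)
        intro k hk
        obtain ⟨hkP, hknr, hklt⟩ := Finset.mem_filter.1 hk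
        exact persist u w k (Finset.mem_filter.2 ⟨hkP, hknr, lt_trans hklt hru⟩)
      · push_neg at hex
        refine le_trans (hinv1 u w hold) (Finset.card_le_card ?_)
        intro k hk
        obtain ⟨hkP, hklt⟩ := Finset.mem_filter.1 hk
        exact persist u w k (Finset.mem_filter.2 ⟨hkP, hex k hk, hklt⟩)
    · refine le_trans (daRej_aux hr) (Finset.card_le_card ?_)
      intro k hk
      exact persist u w k hk
  · -- inv2
    intro u w hμ hw
    rcases daStep_cases hw with hold | ⟨hp, hr⟩
    · exact hinv2 u w hμ hold
    · -- u is rejected by its μ1-school: derive a blocking pair of μ1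
      set T := (daProps I R w).filter
        (fun k => k ∉ daRej I R w ∧ I.rkW w k < I.rkW w u) with hT
      have hTq : I.q w ≤ T.card := daRej_aux hr
      have huT : u ∉ T := fun h => lt_irrefl _ (Finset.mem_filter.1 h).2.2
      have hex : ∃ k ∈ T, μ1 k ≠ some w := by
        by_contra hall
        push_neg at hall
        have hsub : ((insert u T : Finset U) : Set U) ⊆ assignedTo μ1 w := by
          intro x hx
          simp only [Finset.coe_insert, Set.mem_insert_iff, Finset.mem_coe] at hx
          rcases hx with rfl | hx
          · exact hμ
          · exact hall x hx
        have hcard : (insert u T).card ≤ load μ1 w := by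
          rw [← Set.ncard_coe_finset]
          exact Set.ncard_le_ncard hsub (Set.toFinite _)
        rw [Finset.card_insert_of_notMem huT] at hcard
        have h1 := hload w
        have h2 := hqle w
        omega
      obtain ⟨k, hkT, hkne⟩ := hex
      obtain ⟨hkP, hknr, hklt⟩ := Finset.mem_filter.1 hkT
      have hkprop := mem_daProps.1 hkP
      have hwk : w ∈ I.accS k := (Finset.mem_sdiff.1 (daProp_spec hkprop).1).1
      have hpref : I.PrefOut k w (μ1 k) := by
        rcases hμk : μ1 k with _ | w'
        · exact Or.inl rfl
        · refine Or.inr ⟨w', rfl, ?_⟩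
          have hw' : w' ∈ I.accS k := hm k w' hμk
          have hnR : w' ∉ R k := hinv2 k w' hμk
          have hle := (daProp_spec hkprop).2 w' (Finset.mem_sdiff.2 ⟨hw', hnR⟩)
          rcases lt_or_eq_of_le hle with h | h
          · exact h
          · have heq : w = w' := I.rkS_inj k w hwk w' hw' h
            exact absurd hμk (heq ▸ hkne)
      exact hnb k w ((I.acc_iff k w).2 hwk) hpref u hμ hklt

/-- termination measure -/
def daMeas (I : MM U W) (R : U → Finset W) : ℕ := ∑ u, (I.accS u \ R u).card

theorem daMeas_step_lt {I : MM U W} {R : U → Finset W}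
    (hne : ¬ ∀ w, daRej I R w = ∅) : daMeas I (daStep I R) < daMeas I R := by
  push_neg at hne
  obtain ⟨w, hw⟩ := hne
  obtain ⟨u, hu⟩ := hw
  have hp : daProp I R u = some w := mem_daProps.1 (Finset.mem_filter.1 hu).1
  have hmem := (daProp_spec hp).1
  have hstep : daStep I R u = insert w (R u) := daStep_eq_of_rej hp hu
  apply Finset.sum_lt_sum
  · intro i _
    exact Finset.card_le_card
      (Finset.sdiff_subset_sdiff (Finset.Subset.refl _) (daStep_subset I R i))
  · refine ⟨u, Finset.mem_univ u, Finset.card_lt_card ?_⟩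
    rw [Finset.ssubset_iff_of_subset
      (Finset.sdiff_subset_sdiff (Finset.Subset.refl _) (daStep_subset I R u))]
    refine ⟨w, hmem, ?_⟩
    rw [hstep]
    simp

theorem daExists_final (I : MM U W) (q1 : W → ℕ) (μ1 : U → Option W)
    (hH : DaHyp I q1 μ1) :
    ∃ R, DaInv I μ1 R ∧ ∀ w, daRej I R w = ∅ := by
  suffices h : ∀ n (R : U → Finset W), daMeas I R ≤ n → DaInv I μ1 R →
      ∃ R', DaInv I μ1 R' ∧ ∀ w, daRej I R' w = ∅ by
    refine h (daMeas I (fun _ => ∅)) _ le_rfl ?_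
    exact ⟨fun u => Finset.empty_subset _,
      fun u w h' => absurd h' (Finset.notMem_empty w),
      fun u w _ => Finset.notMem_empty w⟩
  intro n
  induction n with
  | zero =>
    intro R hle hInv
    by_cases hfin : ∀ w, daRej I R w = ∅
    · exact ⟨R, hInv, hfin⟩
    · exact absurd (lt_of_lt_of_le (daMeas_step_lt hfin) hle) (Nat.not_lt_zero _)
  | succ n ih =>
    intro R hle hInv
    by_cases hfin : ∀ w, daRej I R w = ∅
    · exact ⟨R, hInv, hfin⟩
    · exact ih (daStep I R)
        (Nat.lt_succ_iff.1 (lt_of_lt_of_le (daMeas_step_lt hfin) hle))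
        (daInv_step hH hInv)

theorem assignedTo_daProp (I : MM U W) (R : U → Finset W) (w : W) :
    assignedTo (daProp I R) w = ↑(daProps I R w) := by
  ext u
  simp [assignedTo, mem_daProps]

theorem load_daProp (I : MM U W) (R : U → Finset W) (w : W) :
    load (daProp I R) w = (daProps I R w).card := by
  rw [load, assignedTo_daProp, Set.ncard_coe_finset]

theorem daFinal_card_le {I : MM U W} {R : U → Finset W} {w : W}
    (hfin : daRej I R w = ∅) : (daProps I R w).card ≤ I.q w := by
  by_contra hlt
  push_neg at hlt
  have hne : (daProps I R w).Nonempty :=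
    Finset.card_pos.1 (lt_of_le_of_lt (Nat.zero_le _) hlt)
  obtain ⟨m, hmm, hmax⟩ := (daProps I R w).exists_max_image (I.rkW w) hne
  have hsub : daProps I R w \ {m} ⊆ daBeats I R w m := by
    intro p hp
    obtain ⟨hpP, hpm⟩ := Finset.mem_sdiff.1 hp
    have hne' : p ≠ m := by simpa using hpm
    refine Finset.mem_filter.2 ⟨hpP, ?_⟩
    rcases lt_or_eq_of_le (hmax p hpP) with h | h
    · exact h
    · exact absurd (I.rkW_inj w p (daProps_subset_accW hpP) m (daProps_subset_accW hmm) h) hne'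
  have hcard : I.q w ≤ (daBeats I R w m).card := by
    have h1 := Finset.card_le_card hsub
    rw [Finset.card_sdiff_of_subset (Finset.singleton_subset_iff.2 hmm)] at h1
    simp only [Finset.card_singleton] at h1
    omega
  have hmr : m ∈ daRej I R w := Finset.mem_filter.2 ⟨hmm, hcard⟩
  rw [hfin] at hmr
  exact absurd hmr (Finset.notMem_empty m)

theorem daFinal_stable {I : MM U W} {μ1 : U → Option W} {R : U → Finset W}
    (hInv : DaInv I μ1 R) (hfin : ∀ w, daRej I R w = ∅) :
    I.Stable (daProp I R) := by
  obtain ⟨hgood, hinv1, _⟩ := hInv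
  constructor
  · constructor
    · intro u w h
      exact (Finset.mem_sdiff.1 (daProp_spec h).1).1
    · intro w
      rw [load_daProp]
      exact daFinal_card_le (hfin w)
  · rintro u w ⟨hacc, hpref, hdisj⟩
    have hwa : w ∈ I.accS u := (I.acc_iff u w).1 hacc
    have hR : w ∈ R u := by
      by_contra hnR
      have hmemw : w ∈ I.accS u \ R u := Finset.mem_sdiff.2 ⟨hwa, hnR⟩
      obtain ⟨w0, hw0⟩ := daPick_some (I := I) (u := u) ⟨w, hmemw⟩
      have hw0' : daProp I R u = some w0 := hw0
      have hmin := (daProp_spec hw0').2 w hmemw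
      rcases hpref with hnone | ⟨w', hw', hlt⟩
      · rw [hw0'] at hnone
        cases hnone
      · rw [hw0'] at hw'
        injection hw' with hww
        subst hww
        exact absurd hmin (not_le.2 hlt)
    have hq := hinv1 u w hR
    rcases hdisj with hload | ⟨u', hu', hlt⟩
    · rw [load_daProp] at hload
      have h1 : (daBeats I R w u).card ≤ (daProps I R w).card :=
        Finset.card_le_card (Finset.filter_subset _ _)
      omega
    · have hu'' : daProp I R u' = some w := hu'
      have hu'P : u' ∈ daProps I R w := mem_daProps.2 hu''
      have hsub : daBeats I R w u ⊆ daBeats I R w u' := by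
        intro k hk
        obtain ⟨hkP, hklt⟩ := Finset.mem_filter.1 hk
        exact Finset.mem_filter.2 ⟨hkP, lt_trans hklt hlt⟩
      have hmr : u' ∈ daRej I R w :=
        Finset.mem_filter.2 ⟨hu'P, le_trans hq (Finset.card_le_card hsub)⟩
      rw [hfin w] at hmr
      exact absurd hmr (Finset.notMem_empty _)

theorem daFinal_protect {I : MM U W} {μ1 : U → Option W} {R : U → Finset W}
    (hm : I.IsMatching μ1) (hInv : DaInv I μ1 R) :
    ∀ u w, μ1 u = some w → ∃ w', daProp I R u = some w' ∧ I.rkS u w' ≤ I.rkS u w := by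
  intro u w hμ
  have hw : w ∈ I.accS u \ R u := Finset.mem_sdiff.2 ⟨hm u w hμ, hInv.2.2 u w hμ⟩
  obtain ⟨w', hw'⟩ := daPick_some (I := I) (u := u) ⟨w, hw⟩
  have hw'' : daProp I R u = some w' := hw'
  exact ⟨w', hw'', (daProp_spec hw'').2 w hw⟩

end DAux


/-- Lemma 2.4 (i): increasing capacities weakly improves all
students' outcomes in their student-optimal stable matchings. -/
theorem statement_0 {U W : Type*} [Fintype U] [Fintype W] [DecidableEq U] [DecidableEq W]
    (I1 I2 : MM U W)
    (haccS : I1.accS = I2.accS) (haccW : I1.accW = I2.accW)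
    (hrkS : I1.rkS = I2.rkS) (hrkW : I1.rkW = I2.rkW)
    (hq : ∀ w, I1.q w ≤ I2.q w)
    (μ1 μ2 : U → Option W)
    (h1 : I1.StudentOptimal μ1) (h2 : I2.StudentOptimal μ2) :
    ∀ u, I1.WeakPref u μ2 μ1 := by
  intro u
  have hH : DaHyp I2 I1.q μ1 := by
    refine ⟨?_, h1.1.1.2, hq, ?_⟩
    · intro x w hx
      rw [← haccS]
      exact h1.1.1.1 x w hx
    · intro x w hxw hpref u' hu' hlt
      apply h1.1.2 x w
      refine ⟨?_, ?_, Or.inr ⟨u', hu', ?_⟩⟩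
      · rw [haccW]; exact hxw
      · simpa only [MM.PrefOut, hrkS] using hpref
      · rw [hrkW]; exact hlt
  obtain ⟨R, hInv, hfin⟩ := daExists_final I2 I1.q μ1 hH
  have hstab := daFinal_stable hInv hfin
  have hwp := h2.2 (daProp I2 R) hstab u
  rcases hμ1 : μ1 u with _ | w1
  · rcases hμ2 : μ2 u with _ | w2
    · exact Or.inl (by rw [hμ2, hμ1])
    · exact Or.inr ⟨w2, hμ2, Or.inl hμ1⟩
  · obtain ⟨w', hν, hle⟩ := daFinal_protect hH.1 hInv u w1 hμ1
    have hw2 : ∃ w2, μ2 u = some w2 ∧ I2.rkS u w2 ≤ I2.rkS u w' := by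
      rcases hwp with heq | ⟨w2, hw2, hpo⟩
      · exact ⟨w', by rw [heq, hν], le_refl _⟩
      · rcases hpo with hnone | ⟨w3, hw3, hlt⟩
        · rw [hν] at hnone
          cases hnone
        · rw [hν] at hw3
          injection hw3 with h3
          subst h3
          exact ⟨w2, hw2, le_of_lt hlt⟩
    obtain ⟨w2, hμ2, hle2⟩ := hw2
    have hle3 : I2.rkS u w2 ≤ I2.rkS u w1 := le_trans hle2 hle
    rcases lt_or_eq_of_le hle3 with hlt | heq
    · refine Or.inr ⟨w2, hμ2, Or.inr ⟨w1, hμ1, ?_⟩⟩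
      rw [hrkS]
      exact hlt
    · have hw2a : w2 ∈ I2.accS u := h2.1.1.1 u w2 hμ2
      have hw1a : w1 ∈ I2.accS u := hH.1 u w1 hμ1
      have heqw : w2 = w1 := I2.rkS_inj u w2 hw2a w1 hw1a heq
      exact Or.inl (by rw [hμ2, hμ1, heqw])
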